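/- Let 1 ≤ p < ∞, let n be a positive integer and let X, Y be Banach spaces. If every continuous n-homogeneous polynomial P : X → Y is factorable strongly p-summing, then every continuous linear operator u : X → Y is absolutely p-summing. -/

import Mathlib

open scoped BigOperators
open MeasureTheory

noncomputable section

section Defs

variable (𝕜 : Type*) [RCLike 𝕜]

section Multi

variable {n : ℕ} {X : Fin n → Type*} {Y : Type*}
  [∀ k, NormedAddCommGroup (X k)] [∀ k, NormedSpace 𝕜 (X k)]
  [NormedAddCommGroup Y] [NormedSpace 𝕜 Y]

/-- `C` witnesses the defining inequality of factorable strongly `p`-summing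
multilinear operators. -/
def FactStronglySummingBound (p : ℝ) (T : ContinuousMultilinearMap 𝕜 X Y) (C : ℝ) : Prop :=
  0 ≤ C ∧ ∀ (m₁ m₂ : ℕ) (x : Fin m₁ → Fin m₂ → (∀ k, X k)) (lam : Fin m₁ → Fin m₂ → 𝕜),
    (∑ j, ‖∑ i, lam j i • T (x j i)‖ ^ p) ^ (1 / p) ≤
      C * ⨆ φ : {φ : ContinuousMultilinearMap 𝕜 X 𝕜 // ‖φ‖ ≤ 1},
        (∑ j, ‖∑ i, lam j i • φ.1 (x j i)‖ ^ p) ^ (1 / p)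

/-- Factorable strongly `p`-summing continuous multilinear operators. -/
def FactStronglySumming (p : ℝ) (T : ContinuousMultilinearMap 𝕜 X Y) : Prop :=
  ∃ C, FactStronglySummingBound 𝕜 p T C

/-- The factorable strongly `p`-summing norm `‖T‖_{FSt,p}` (the least admissible constant). -/
def fstMultiNorm (p : ℝ) (T : ContinuousMultilinearMap 𝕜 X Y) : ℝ :=
  sInf {C | FactStronglySummingBound 𝕜 p T C}

/-- Strongly `p`-summing continuous multilinear operators (Dimant). -/
def StronglySumming (p : ℝ) (T : ContinuousMultilinearMap 𝕜 X Y) : Prop :=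
  ∃ C : ℝ, 0 ≤ C ∧ ∀ (m : ℕ) (x : Fin m → (∀ k, X k)),
    (∑ j, ‖T (x j)‖ ^ p) ^ (1 / p) ≤
      C * ⨆ φ : {φ : ContinuousMultilinearMap 𝕜 X 𝕜 // ‖φ‖ ≤ 1},
        (∑ j, ‖φ.1 (x j)‖ ^ p) ^ (1 / p)

/-- Factorable `p`-dominated continuous multilinear operators. -/
def FactorablePDominated (p : ℝ) (T : ContinuousMultilinearMap 𝕜 X Y) : Prop :=
  ∃ C : ℝ, 0 ≤ C ∧ ∀ (m₁ m₂ : ℕ) (x : Fin m₁ → Fin m₂ → (∀ k, X k))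
    (lam : Fin m₁ → Fin m₂ → 𝕜),
    (∑ j, ‖∑ i, lam j i • T (x j i)‖ ^ p) ^ (1 / p) ≤
      C * ⨆ φ : ∀ k, {f : X k →L[𝕜] 𝕜 // ‖f‖ ≤ 1},
        (∑ j, ‖∑ i, lam j i • ∏ k, (φ k).1 (x j i k)‖ ^ p) ^ (1 / p)

/-- `p`-semi-integral continuous multilinear operators. -/
def PSemiIntegral (p : ℝ) (T : ContinuousMultilinearMap 𝕜 X Y) : Prop :=
  ∃ C : ℝ, 0 ≤ C ∧ ∀ (m : ℕ) (x : Fin m → (∀ k, X k)),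
    (∑ j, ‖T (x j)‖ ^ p) ^ (1 / p) ≤
      C * ⨆ φ : ∀ k, {f : X k →L[𝕜] 𝕜 // ‖f‖ ≤ 1},
        (∑ j, ‖∏ k, (φ k).1 (x j k)‖ ^ p) ^ (1 / p)

end Multi

section Poly

variable {X Y : Type*} [NormedAddCommGroup X] [NormedSpace 𝕜 X]
  [NormedAddCommGroup Y] [NormedSpace 𝕜 Y]

/-- `P` is a continuous `m`-homogeneous polynomial: the diagonal of a continuous
`m`-linear map. -/
def IsHomogPoly (m : ℕ) (P : X → Y) : Prop :=
  ∃ T : ContinuousMultilinearMap 𝕜 (fun _ : Fin m => X) Y, ∀ x, P x = T (fun _ => x)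

/-- Sup norm of a (homogeneous polynomial) map on the closed unit ball. -/
def polyNorm (P : X → Y) : ℝ :=
  ⨆ x : {x : X // ‖x‖ ≤ 1}, ‖P x.1‖

/-- `C` witnesses the defining inequality of factorable strongly `p`-summing
`m`-homogeneous polynomials. -/
def FactStronglySummingPolyBound (m : ℕ) (p : ℝ) (P : X → Y) (C : ℝ) : Prop :=
  0 ≤ C ∧ ∀ (m₁ m₂ : ℕ) (x : Fin m₁ → Fin m₂ → X) (lam : Fin m₁ → Fin m₂ → 𝕜),
    (∑ j, ‖∑ i, lam j i • P (x j i)‖ ^ p) ^ (1 / p) ≤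
      C * ⨆ q : {q : X → 𝕜 // IsHomogPoly 𝕜 m q ∧ polyNorm q ≤ 1},
        (∑ j, ‖∑ i, lam j i • q.1 (x j i)‖ ^ p) ^ (1 / p)

/-- Factorable strongly `p`-summing `m`-homogeneous polynomials. -/
def FactStronglySummingPoly (m : ℕ) (p : ℝ) (P : X → Y) : Prop :=
  IsHomogPoly 𝕜 m P ∧ ∃ C, FactStronglySummingPolyBound 𝕜 m p P C

/-- The factorable strongly `p`-summing norm `‖P‖_{FSt,p}` of a polynomial. -/
def fstPolyNorm (m : ℕ) (p : ℝ) (P : X → Y) : ℝ :=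
  sInf {C | FactStronglySummingPolyBound 𝕜 m p P C}

/-- `C` witnesses the defining inequality of absolutely `p`-summing linear operators. -/
def AbsSummingBound (p : ℝ) (u : X →L[𝕜] Y) (C : ℝ) : Prop :=
  0 ≤ C ∧ ∀ (m : ℕ) (x : Fin m → X),
    (∑ j, ‖u (x j)‖ ^ p) ^ (1 / p) ≤
      C * ⨆ φ : {φ : X →L[𝕜] 𝕜 // ‖φ‖ ≤ 1}, (∑ j, ‖φ.1 (x j)‖ ^ p) ^ (1 / p)

/-- Absolutely `p`-summing continuous linear operators. -/
def AbsolutelySumming (p : ℝ) (u : X →L[𝕜] Y) : Prop :=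
  ∃ C, AbsSummingBound 𝕜 p u C

/-- The absolutely `p`-summing norm `π_p(u)` (the least admissible constant). -/
def piSummingNorm (p : ℝ) (u : X →L[𝕜] Y) : ℝ :=
  sInf {C | AbsSummingBound 𝕜 p u C}

end Poly

end Defs

end

noncomputable section Aux

variable {𝕜 : Type*} [RCLike 𝕜] {X Y : Type*}
  [NormedAddCommGroup X] [NormedSpace 𝕜 X]
  [NormedAddCommGroup Y] [NormedSpace 𝕜 Y]

lemma aux_exists_coeffs (n : ℕ) (hn : 0 < n) :
    ∃ c : Fin (n+1) → 𝕜, ∀ k : ℕ, k ≤ n →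
      ∑ i, c i * ((i : ℕ) : 𝕜) ^ k = if k = 1 then 1 else 0 := by
  classical
  set v : Fin (n+1) → 𝕜 := fun i => ((i : ℕ) : 𝕜) with hv
  set M := Matrix.vandermonde v with hM
  have hdet : IsUnit M.det := by
    rw [hM, Matrix.det_vandermonde]
    refine (Finset.prod_ne_zero_iff.2 fun i _ =>
      Finset.prod_ne_zero_iff.2 fun j hj => ?_).isUnit
    have hij : i < j := Finset.mem_Ioi.1 hj
    have hij' : (i:ℕ) ≠ (j:ℕ) := fun hh => hij.ne (Fin.ext hh)
    have hne : ((i:ℕ):𝕜) ≠ ((j:ℕ):𝕜) := by exact_mod_cast hij'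
    simpa [hv, sub_ne_zero] using hne.symm
  set c := Matrix.vecMul (Pi.single (1 : Fin (n+1)) (1:𝕜)) M⁻¹ with hc
  have h1 : Matrix.vecMul c M = (Pi.single 1 1 : Fin (n+1) → 𝕜) := by
    rw [hc, Matrix.vecMul_vecMul, Matrix.nonsing_inv_mul M hdet, Matrix.vecMul_one]
  refine ⟨c, fun k hk => ?_⟩
  have hk' : k < n + 1 := by omega
  have h2 := congrFun h1 ⟨k, hk'⟩
  have h3 : Matrix.vecMul c M ⟨k, hk'⟩ = ∑ i, c i * v i ^ k := by
    simp [Matrix.vecMul, dotProduct, hM, Matrix.vandermonde_apply]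
  have he : ((⟨k, hk'⟩ : Fin (n+1)) = 1) ↔ k = 1 := by
    rw [Fin.ext_iff, Fin.val_one', Nat.mod_eq_of_lt (by omega : 1 < n+1)]
  have h4 : (Pi.single 1 1 : Fin (n+1) → 𝕜) ⟨k, hk'⟩ = if k = 1 then 1 else 0 := by
    rw [Pi.single_apply, if_congr he rfl rfl]
  rw [h3, h4] at h2
  exact h2

lemma aux_polarization (n : ℕ) {Z : Type*} [NormedAddCommGroup Z] [NormedSpace 𝕜 Z]
    (S : ContinuousMultilinearMap 𝕜 (fun _ : Fin n => X) Z) (c : Fin (n+1) → 𝕜)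
    (hc : ∀ k : ℕ, k ≤ n → ∑ i, c i * ((i:ℕ):𝕜) ^ k = if k = 1 then 1 else 0)
    (a x : X) :
    ∑ i : Fin (n+1), c i • S (fun _ => a + ((i:ℕ):𝕜) • x) =
      ∑ k : Fin n, S (Function.update (fun _ => a) k x) := by
  classical
  have expand : ∀ t : 𝕜, S (fun _ => a + t • x) =
      ∑ s : Finset (Fin n), t ^ s.card •
        S (s.piecewise (fun _ => x) (fun _ => a)) := by
    intro t
    have h0 : (fun _ : Fin n => a + t • x)
        = (fun _ : Fin n => t • x) + (fun _ : Fin n => a) := by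
      funext k; simp [add_comm]
    rw [h0, S.map_add_univ]
    refine Finset.sum_congr rfl fun s _ => ?_
    have hps : s.piecewise (fun _ : Fin n => t • x) (fun _ : Fin n => a)
        = s.piecewise
            (fun i => t • (s.piecewise (fun _ : Fin n => x) (fun _ : Fin n => a)) i)
            (s.piecewise (fun _ : Fin n => x) (fun _ : Fin n => a)) := by
      funext i
      by_cases hi : i ∈ s <;> simp [Finset.piecewise, hi]
    rw [hps, S.map_piecewise_smul, Finset.prod_const]
  simp_rw [expand, Finset.smul_sum, smul_smul]
  rw [Finset.sum_comm]
  have hstep : ∀ s : Finset (Fin n),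
      ∑ i : Fin (n+1), (c i * ((i:ℕ):𝕜) ^ s.card) •
          S (s.piecewise (fun _ => x) (fun _ => a))
        = (if s.card = 1 then (1:𝕜) else 0) •
            S (s.piecewise (fun _ => x) (fun _ => a)) := by
    intro s
    rw [← Finset.sum_smul, hc s.card (by simpa using Finset.card_le_univ s)]
  rw [Finset.sum_congr rfl fun s _ => hstep s]
  simp_rw [ite_smul, one_smul, zero_smul]
  rw [← Finset.sum_filter]
  have himg : (Finset.univ : Finset (Finset (Fin n))).filter (fun s => s.card = 1)
      = Finset.univ.image (fun k : Fin n => ({k} : Finset (Fin n))) := by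
    ext s
    simp [Finset.card_eq_one, eq_comm]
  rw [himg, Finset.sum_image (fun k _ l _ hkl => Finset.singleton_injective hkl)]
  refine Finset.sum_congr rfl fun k _ => ?_
  rw [Finset.piecewise_singleton]

lemma aux_diag_bddAbove (n : ℕ)
    (S : ContinuousMultilinearMap 𝕜 (fun _ : Fin n => X) 𝕜) :
    BddAbove (Set.range fun z : {x : X // ‖x‖ ≤ 1} => ‖S (fun _ => z.1)‖) := by
  refine ⟨‖S‖, ?_⟩
  rintro - ⟨z, rfl⟩
  calc ‖S (fun _ => z.1)‖ ≤ ‖S‖ * ∏ _i : Fin n, ‖z.1‖ := S.le_opNorm _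
    _ ≤ ‖S‖ * 1 := by
        refine mul_le_mul_of_nonneg_left ?_ (norm_nonneg _)
        simp only [Finset.prod_const, Finset.card_univ, Fintype.card_fin]
        exact pow_le_one₀ (norm_nonneg _) z.2
    _ = ‖S‖ := mul_one _

lemma aux_diag_le_polyNorm (n : ℕ)
    (S : ContinuousMultilinearMap 𝕜 (fun _ : Fin n => X) 𝕜)
    {z : X} (hz : ‖z‖ ≤ 1) :
    ‖S (fun _ => z)‖ ≤ polyNorm (fun x : X => S (fun _ => x)) :=
  le_ciSup (aux_diag_bddAbove n S) ⟨z, hz⟩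

lemma aux_diag_norm_le (n : ℕ) (hn : 0 < n)
    (S : ContinuousMultilinearMap 𝕜 (fun _ : Fin n => X) 𝕜) (y : X) :
    ‖S (fun _ => y)‖ ≤ polyNorm (fun x : X => S (fun _ => x)) * ‖y‖ ^ n := by
  rcases eq_or_ne y 0 with rfl | hy
  · have h0 : S (fun _ => (0:X)) = 0 := S.map_coord_zero ⟨0, hn⟩ rfl
    simp [h0, zero_pow hn.ne']
  · have hr : (0:ℝ) < ‖y‖ := norm_pos_iff.2 hy
    have hrK : ((‖y‖ : ℝ) : 𝕜) ≠ 0 := RCLike.ofReal_ne_zero.2 hr.ne'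
    set z : X := ((‖y‖ : ℝ) : 𝕜)⁻¹ • y with hzdef
    have hzn : ‖z‖ = 1 := by
      rw [hzdef, norm_smul, norm_inv, RCLike.norm_ofReal, abs_of_pos hr,
        inv_mul_cancel₀ hr.ne']
    have hyz : (fun _ : Fin n => y) = fun _ : Fin n => ((‖y‖:ℝ):𝕜) • z := by
      funext k
      rw [hzdef, smul_inv_smul₀ hrK]
    rw [hyz, ContinuousMultilinearMap.map_smul_univ, norm_smul, Finset.prod_const,
      Finset.card_univ, Fintype.card_fin, norm_pow, RCLike.norm_ofReal, abs_of_pos hr]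
    exact le_trans
      (mul_le_mul_of_nonneg_left (aux_diag_le_polyNorm n S hzn.le) (pow_nonneg hr.le n))
      (le_of_eq (mul_comm _ _))

def auxT (n : ℕ) (hn : 0 < n) (φ₀ : X →L[𝕜] 𝕜) (u : X →L[𝕜] Y) :
    ContinuousMultilinearMap 𝕜 (fun _ : Fin n => X) Y :=
  MultilinearMap.mkContinuous
    { toFun := fun v =>
        (∏ k ∈ Finset.univ.erase (⟨0, hn⟩ : Fin n), φ₀ (v k)) • u (v ⟨0, hn⟩)
      map_update_add' := by
        intro inst v i x y
        have hii : inst = instDecidableEqFin n := Subsingleton.elim _ _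
        subst hii
        by_cases hi : i = (⟨0, hn⟩ : Fin n)
        · subst hi
          have hP : ∀ w : X, ∏ k ∈ Finset.univ.erase (⟨0, hn⟩ : Fin n),
              φ₀ (Function.update v ⟨0, hn⟩ w k)
              = ∏ k ∈ Finset.univ.erase (⟨0, hn⟩ : Fin n), φ₀ (v k) := by
            intro w
            refine Finset.prod_congr rfl fun k hk => ?_
            rw [Function.update_of_ne (Finset.ne_of_mem_erase hk)]
          simp only [hP, Function.update_self, map_add, smul_add]
        · have hmem : i ∈ Finset.univ.erase (⟨0, hn⟩ : Fin n) :=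
            Finset.mem_erase.2 ⟨hi, Finset.mem_univ i⟩
          have hP : ∀ w : X, ∏ k ∈ Finset.univ.erase (⟨0, hn⟩ : Fin n),
              φ₀ (Function.update v i w k)
              = φ₀ w * ∏ k ∈ (Finset.univ.erase (⟨0, hn⟩ : Fin n)).erase i, φ₀ (v k) := by
            intro w
            rw [← Finset.mul_prod_erase _ _ hmem, Function.update_self]
            congr 1
            refine Finset.prod_congr rfl fun k hk => ?_
            rw [Function.update_of_ne (Finset.ne_of_mem_erase hk)]
          have hu : ∀ w : X, u (Function.update v i w (⟨0, hn⟩ : Fin n)) = u (v ⟨0, hn⟩) := by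
            intro w; rw [Function.update_of_ne (Ne.symm hi)]
          simp only [hP, hu, map_add, add_mul, add_smul]
      map_update_smul' := by
        intro inst v i cc x
        have hii : inst = instDecidableEqFin n := Subsingleton.elim _ _
        subst hii
        by_cases hi : i = (⟨0, hn⟩ : Fin n)
        · subst hi
          have hP : ∀ w : X, ∏ k ∈ Finset.univ.erase (⟨0, hn⟩ : Fin n),
              φ₀ (Function.update v ⟨0, hn⟩ w k)
              = ∏ k ∈ Finset.univ.erase (⟨0, hn⟩ : Fin n), φ₀ (v k) := by
            intro w
            refine Finset.prod_congr rfl fun k hk => ?_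
            rw [Function.update_of_ne (Finset.ne_of_mem_erase hk)]
          simp only [hP, Function.update_self, u.map_smul]
          rw [smul_comm]
        · have hmem : i ∈ Finset.univ.erase (⟨0, hn⟩ : Fin n) :=
            Finset.mem_erase.2 ⟨hi, Finset.mem_univ i⟩
          have hP : ∀ w : X, ∏ k ∈ Finset.univ.erase (⟨0, hn⟩ : Fin n),
              φ₀ (Function.update v i w k)
              = φ₀ w * ∏ k ∈ (Finset.univ.erase (⟨0, hn⟩ : Fin n)).erase i, φ₀ (v k) := by
            intro w
            rw [← Finset.mul_prod_erase _ _ hmem, Function.update_self]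
            congr 1
            refine Finset.prod_congr rfl fun k hk => ?_
            rw [Function.update_of_ne (Finset.ne_of_mem_erase hk)]
          have hu : ∀ w : X, u (Function.update v i w (⟨0, hn⟩ : Fin n)) = u (v ⟨0, hn⟩) := by
            intro w; rw [Function.update_of_ne (Ne.symm hi)]
          simp only [hP, hu, φ₀.map_smul, smul_eq_mul]
          rw [mul_assoc, mul_smul]
    }
    (‖φ₀‖ ^ (n-1) * ‖u‖)
    (by
      intro v
      show ‖(∏ k ∈ Finset.univ.erase (⟨0, hn⟩ : Fin n), φ₀ (v k)) • u (v ⟨0, hn⟩)‖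
        ≤ ‖φ₀‖ ^ (n-1) * ‖u‖ * ∏ i, ‖v i‖
      rw [norm_smul, norm_prod]
      have h2 : ∏ k ∈ Finset.univ.erase (⟨0, hn⟩ : Fin n), ‖φ₀ (v k)‖
          ≤ ∏ k ∈ Finset.univ.erase (⟨0, hn⟩ : Fin n), (‖φ₀‖ * ‖v k‖) :=
        Finset.prod_le_prod (fun k _ => norm_nonneg _) (fun k _ => φ₀.le_opNorm _)
      have h3 : ‖u (v ⟨0, hn⟩)‖ ≤ ‖u‖ * ‖v ⟨0, hn⟩‖ := u.le_opNorm _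
      calc (∏ k ∈ Finset.univ.erase (⟨0, hn⟩ : Fin n), ‖φ₀ (v k)‖) * ‖u (v ⟨0, hn⟩)‖
          ≤ (∏ k ∈ Finset.univ.erase (⟨0, hn⟩ : Fin n), (‖φ₀‖ * ‖v k‖)) * (‖u‖ * ‖v ⟨0, hn⟩‖) :=
            mul_le_mul h2 h3 (norm_nonneg _)
              (Finset.prod_nonneg fun k _ => by positivity)
        _ = ‖φ₀‖ ^ (n-1) * ‖u‖ * ∏ i, ‖v i‖ := by
            rw [Finset.prod_mul_distrib, Finset.prod_const]
            have hcard : (Finset.univ.erase (⟨0, hn⟩ : Fin n)).card = n - 1 := by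
              rw [Finset.card_erase_of_mem (Finset.mem_univ _), Finset.card_univ,
                Fintype.card_fin]
            have hpe : (∏ k ∈ Finset.univ.erase (⟨0, hn⟩ : Fin n), ‖v k‖) * ‖v ⟨0, hn⟩‖
                = ∏ i, ‖v i‖ :=
              Finset.prod_erase_mul _ _ (Finset.mem_univ _)
            rw [hcard, ← hpe]; ring)

lemma auxT_apply (n : ℕ) (hn : 0 < n) (φ₀ : X →L[𝕜] 𝕜) (u : X →L[𝕜] Y)
    (v : Fin n → X) :
    auxT n hn φ₀ u v
      = (∏ k ∈ Finset.univ.erase (⟨0, hn⟩ : Fin n), φ₀ (v k)) • u (v ⟨0, hn⟩) := rfl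

lemma aux_lp_smul {m : ℕ} {p : ℝ} (hp : 1 ≤ p) {K : ℝ} (hK : 0 ≤ K) (b : Fin m → ℝ)
    (hb : ∀ j, 0 ≤ b j) :
    (∑ j, (K * b j) ^ p) ^ (1/p) = K * (∑ j, b j ^ p) ^ (1/p) := by
  have hp0 : p ≠ 0 := (lt_of_lt_of_le one_pos hp).ne'
  have h1 : ∀ j, (K * b j) ^ p = K ^ p * b j ^ p := fun j => Real.mul_rpow hK (hb j)
  simp_rw [h1]
  rw [← Finset.mul_sum,
    Real.mul_rpow (Real.rpow_nonneg hK p)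
      (Finset.sum_nonneg fun j _ => Real.rpow_nonneg (hb j) p),
    ← Real.rpow_mul hK, mul_one_div_cancel hp0, Real.rpow_one]

end Aux

/-- if every continuous `n`-homogeneous polynomial `P : X → Y` is
factorable strongly `p`-summing, then every continuous linear operator `u : X → Y` is
absolutely `p`-summing. -/
theorem linear_absSumming_of_factStronglySummingPoly_coincidence
    {𝕜 : Type*} [RCLike 𝕜] {X Y : Type*}
    [NormedAddCommGroup X] [NormedSpace 𝕜 X] [CompleteSpace X]
    [NormedAddCommGroup Y] [NormedSpace 𝕜 Y] [CompleteSpace Y]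
    (n : ℕ) (hn : 0 < n) (p : ℝ) (hp : 1 ≤ p)
    (h : ∀ P : X → Y, IsHomogPoly 𝕜 n P → FactStronglySummingPoly 𝕜 n p P) :
    ∀ u : X →L[𝕜] Y, AbsolutelySumming 𝕜 p u := by
  intro u
  classical
  have hp0 : (0:ℝ) < p := lt_of_lt_of_le one_pos hp
  by_cases hX : ∃ x₀ : X, x₀ ≠ 0
  case neg =>
    push_neg at hX
    refine ⟨0, le_refl 0, fun m x => ?_⟩
    have hx : ∀ j, u (x j) = 0 := fun j => by rw [hX (x j), map_zero]
    have hz : (∑ j, ‖u (x j)‖ ^ p) = 0 := by simp [hx, Real.zero_rpow hp0.ne']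
    rw [hz, Real.zero_rpow (one_div_ne_zero hp0.ne'), zero_mul]
  case pos =>
  obtain ⟨a₀, ha₀⟩ := hX
  obtain ⟨φ₀, hφ₀n, hφ₀a⟩ := exists_dual_vector 𝕜 a₀ (norm_ne_zero_iff.2 ha₀)
  have hra : (0:ℝ) < ‖a₀‖ := norm_pos_iff.2 ha₀
  have hraK : ((‖a₀‖ : ℝ) : 𝕜) ≠ 0 := RCLike.ofReal_ne_zero.2 hra.ne'
  set a : X := ((‖a₀‖ : ℝ) : 𝕜)⁻¹ • a₀ with hadef
  have hφa : φ₀ a = 1 := by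
    rw [hadef, φ₀.map_smul, hφ₀a, smul_eq_mul, inv_mul_cancel₀ hraK]
  have han : ‖a‖ = 1 := by
    rw [hadef, norm_smul, norm_inv, RCLike.norm_ofReal, abs_of_pos hra,
      inv_mul_cancel₀ hra.ne']
  obtain ⟨c, hc⟩ := aux_exists_coeffs (𝕜 := 𝕜) n hn
  set j₀ : Fin n := ⟨0, hn⟩ with hj₀
  set T := auxT (𝕜 := 𝕜) (X := X) (Y := Y) n hn φ₀ u with hT
  set P : X → Y := fun z => T (fun _ => z) with hPdef
  obtain ⟨-, C, hC0, hCineq⟩ := h P ⟨T, fun z => rfl⟩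
  set K : ℝ := (∑ i : Fin (n+1), ‖c i‖) * ((1:ℝ) + n) ^ n with hK
  have hK0 : 0 ≤ K := by
    refine mul_nonneg (Finset.sum_nonneg fun i _ => norm_nonneg _) (pow_nonneg ?_ n)
    positivity
  set K' : ℝ := max K 1 with hK'
  have hK'1 : (1:ℝ) ≤ K' := le_max_right _ _
  have hK'0 : (0:ℝ) < K' := lt_of_lt_of_le one_pos hK'1
  set D : ℝ := (n - 1 : ℕ) * ‖u a‖ with hD
  have hD0 : 0 ≤ D := mul_nonneg (Nat.cast_nonneg _) (norm_nonneg _)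
  refine ⟨C * K' + D, ⟨by positivity, fun m x => ?_⟩⟩
  haveI : Nonempty {φ : X →L[𝕜] 𝕜 // ‖φ‖ ≤ 1} := ⟨⟨0, by simp⟩⟩
  set Sφ : ℝ := ⨆ φ : {φ : X →L[𝕜] 𝕜 // ‖φ‖ ≤ 1},
    (∑ j, ‖φ.1 (x j)‖ ^ p) ^ (1/p) with hSφ
  have hSbdd : BddAbove (Set.range fun φ : {φ : X →L[𝕜] 𝕜 // ‖φ‖ ≤ 1} =>
      (∑ j, ‖φ.1 (x j)‖ ^ p) ^ (1/p)) := by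
    refine ⟨(∑ j, ‖x j‖ ^ p) ^ (1/p), ?_⟩
    rintro - ⟨φ, rfl⟩
    refine Real.rpow_le_rpow
      (Finset.sum_nonneg fun j _ => Real.rpow_nonneg (norm_nonneg _) p)
      (Finset.sum_le_sum fun j _ =>
        Real.rpow_le_rpow (norm_nonneg _) ?_ hp0.le) (by positivity)
    calc ‖φ.1 (x j)‖ ≤ ‖φ.1‖ * ‖x j‖ := φ.1.le_opNorm _
      _ ≤ 1 * ‖x j‖ := mul_le_mul_of_nonneg_right φ.2 (norm_nonneg _)
      _ = ‖x j‖ := one_mul _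
  set w : X → Y := fun z => ∑ k : Fin n, T (Function.update (fun _ => a) k z) with hwdef
  have hwu : ∀ z : X, ‖u z‖ ≤ ‖w z‖ + D * ‖φ₀ z‖ := by
    intro z
    have hTj₀ : T (Function.update (fun _ => a) j₀ z) = u z := by
      rw [hT, auxT_apply]
      have h1 : ∏ k ∈ Finset.univ.erase (⟨0, hn⟩ : Fin n),
          φ₀ (Function.update (fun _ => a) (⟨0, hn⟩ : Fin n) z k) = 1 := by
        refine Finset.prod_eq_one fun k hk => ?_
        rw [Function.update_of_ne (Finset.ne_of_mem_erase hk)]; exact hφa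
      rw [h1, Function.update_self, one_smul]
    have hTk : ∀ k ∈ Finset.univ.erase j₀,
        T (Function.update (fun _ => a) k z) = φ₀ z • u a := by
      intro k hk
      have hkj : k ≠ j₀ := Finset.ne_of_mem_erase hk
      rw [hT, auxT_apply]
      have h1 : ∏ l ∈ Finset.univ.erase (⟨0, hn⟩ : Fin n),
          φ₀ (Function.update (fun _ => a) k z l) = φ₀ z := by
        refine (Finset.prod_eq_single_of_mem k hk fun l _ hlk => ?_).trans ?_
        · rw [Function.update_of_ne hlk]; exact hφa
        · rw [Function.update_self]
      rw [h1, Function.update_of_ne (Ne.symm hkj)]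
    have hw2 : w z = u z + ∑ k ∈ Finset.univ.erase j₀,
        T (Function.update (fun _ => a) k z) := by
      rw [hwdef]
      dsimp only
      rw [← Finset.add_sum_erase Finset.univ _ (Finset.mem_univ j₀), hTj₀]
    have h6 : ‖u z‖ ≤ ‖w z‖ + ‖∑ k ∈ Finset.univ.erase j₀,
        T (Function.update (fun _ => a) k z)‖ := by
      have h7 : u z = w z - ∑ k ∈ Finset.univ.erase j₀,
          T (Function.update (fun _ => a) k z) := by
        rw [hw2]; abel
      rw [h7]; exact norm_sub_le _ _
    refine h6.trans (add_le_add le_rfl ?_)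
    calc ‖∑ k ∈ Finset.univ.erase j₀, T (Function.update (fun _ => a) k z)‖
        ≤ ∑ k ∈ Finset.univ.erase j₀, ‖T (Function.update (fun _ => a) k z)‖ :=
          norm_sum_le _ _
      _ = ∑ k ∈ Finset.univ.erase j₀, ‖φ₀ z‖ * ‖u a‖ :=
          Finset.sum_congr rfl fun k hk => by rw [hTk k hk, norm_smul]
      _ = ((n - 1 : ℕ) : ℝ) * (‖φ₀ z‖ * ‖u a‖) := by
          rw [Finset.sum_const, Finset.card_erase_of_mem (Finset.mem_univ _),
            Finset.card_univ, Fintype.card_fin, nsmul_eq_mul]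
      _ = D * ‖φ₀ z‖ := by rw [hD]; ring
  haveI hqne : Nonempty {q : X → 𝕜 // IsHomogPoly 𝕜 n q ∧ polyNorm q ≤ 1} := by
    refine ⟨⟨fun _ => 0, ⟨0, fun z => by simp⟩, ?_⟩⟩
    have hpn0 : polyNorm (fun _ : X => (0:𝕜)) = ⨆ _ : {x : X // ‖x‖ ≤ 1}, (0:ℝ) := by
      simp [polyNorm]
    haveI : Nonempty { x : X // ‖x‖ ≤ 1 } := ⟨⟨0, by simp⟩⟩
    rw [hpn0, ciSup_const]
    exact zero_le_one
  have hQ : (⨆ q : {q : X → 𝕜 // IsHomogPoly 𝕜 n q ∧ polyNorm q ≤ 1},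
      (∑ j, ‖∑ i : Fin (n+1), c i • q.1 (a + ((i:ℕ):𝕜) • x j)‖ ^ p) ^ (1/p))
      ≤ K' * Sφ := by
    refine ciSup_le fun q => ?_
    obtain ⟨S, hS⟩ := q.2.1
    have hq1 : (fun z : X => S (fun _ => z)) = q.1 := by
      funext z; rw [hS]
    have hpnS : polyNorm (fun z : X => S (fun _ => z)) ≤ 1 := by
      rw [hq1]; exact q.2.2
    set ψ : X →L[𝕜] 𝕜 := ∑ k : Fin n, S.toContinuousLinearMap (fun _ => a) k with hψdef
    have hψa : ∀ z : X, ψ z = ∑ i : Fin (n+1), c i • q.1 (a + ((i:ℕ):𝕜) • z) := by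
      intro z
      have h1 : ψ z = ∑ k : Fin n, S (Function.update (fun _ => a) k z) := by
        rw [hψdef, ContinuousLinearMap.sum_apply]
        rfl
      rw [h1, ← aux_polarization n S c hc a z]
      exact Finset.sum_congr rfl fun i _ => by rw [hS]
    have hunit : ∀ z : X, ‖z‖ ≤ 1 → ‖ψ z‖ ≤ K := by
      intro z hz
      rw [hψa z]
      calc ‖∑ i : Fin (n+1), c i • q.1 (a + ((i:ℕ):𝕜) • z)‖
          ≤ ∑ i : Fin (n+1), ‖c i • q.1 (a + ((i:ℕ):𝕜) • z)‖ := norm_sum_le _ _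
        _ = ∑ i : Fin (n+1), ‖c i‖ * ‖q.1 (a + ((i:ℕ):𝕜) • z)‖ := by
            simp [norm_smul]
        _ ≤ ∑ i : Fin (n+1), ‖c i‖ * ((1:ℝ) + n) ^ n := by
            refine Finset.sum_le_sum fun i _ =>
              mul_le_mul_of_nonneg_left ?_ (norm_nonneg _)
            have h2 : ‖q.1 (a + ((i:ℕ):𝕜) • z)‖
                = ‖S (fun _ => a + ((i:ℕ):𝕜) • z)‖ := by rw [hS]
            rw [h2]
            have hy : ‖a + ((i:ℕ):𝕜) • z‖ ≤ (1:ℝ) + n := by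
              calc ‖a + ((i:ℕ):𝕜) • z‖ ≤ ‖a‖ + ‖((i:ℕ):𝕜) • z‖ := norm_add_le _ _
                _ = 1 + ((i:ℕ):ℝ) * ‖z‖ := by
                    rw [han, norm_smul, RCLike.norm_natCast]
                _ ≤ 1 + (n:ℝ) * 1 := by
                    have hi : ((i:ℕ):ℝ) ≤ (n:ℝ) := by
                      exact_mod_cast Fin.is_le i
                    have := mul_le_mul hi hz (norm_nonneg _) (Nat.cast_nonneg _)
                    linarith
                _ = (1:ℝ) + n := by ring
            refine (aux_diag_norm_le n hn S _).trans ?_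
            calc polyNorm (fun z : X => S (fun _ => z)) * ‖a + ((i:ℕ):𝕜) • z‖ ^ n
                ≤ 1 * ((1:ℝ) + n) ^ n :=
                  mul_le_mul hpnS
                    (pow_le_pow_left₀ (norm_nonneg _) hy n)
                    (pow_nonneg (norm_nonneg _) n)
                    zero_le_one
              _ = ((1:ℝ) + n) ^ n := one_mul _
        _ = K := by rw [hK, Finset.sum_mul]
    have hψK : ‖ψ‖ ≤ K := by
      refine ψ.opNorm_le_bound hK0 fun z => ?_
      rcases eq_or_ne z 0 with rfl | hz
      · simp
      · have hr : (0:ℝ) < ‖z‖ := norm_pos_iff.2 hz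
        have hrK : ((‖z‖:ℝ):𝕜) ≠ 0 := RCLike.ofReal_ne_zero.2 hr.ne'
        have h3 : ‖ψ z‖ = ‖z‖ * ‖ψ (((‖z‖:ℝ):𝕜)⁻¹ • z)‖ := by
          conv_lhs => rw [← smul_inv_smul₀ hrK z]
          rw [ψ.map_smul, norm_smul, RCLike.norm_ofReal, abs_of_pos hr]
        have h4 : ‖(((‖z‖:ℝ):𝕜)⁻¹ • z)‖ ≤ 1 := by
          rw [norm_smul, norm_inv, RCLike.norm_ofReal, abs_of_pos hr,
            inv_mul_cancel₀ hr.ne']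
        rw [h3, mul_comm]
        exact mul_le_mul_of_nonneg_right (hunit _ h4) hr.le
    set φh : X →L[𝕜] 𝕜 := ((K'⁻¹ : ℝ) : 𝕜) • ψ with hφh
    have hφhn : ‖φh‖ ≤ 1 := by
      rw [hφh]
      refine (ContinuousLinearMap.opNorm_smul_le _ _).trans ?_
      rw [RCLike.norm_ofReal, abs_of_pos (inv_pos.2 hK'0)]
      calc K'⁻¹ * ‖ψ‖ ≤ K'⁻¹ * K' :=
          mul_le_mul_of_nonneg_left (hψK.trans (le_max_left _ _))
            (inv_pos.2 hK'0).le
        _ = 1 := inv_mul_cancel₀ hK'0.ne'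
    have hψφ : ∀ z, ‖ψ z‖ = K' * ‖φh z‖ := by
      intro z
      rw [hφh]
      simp only [ContinuousLinearMap.smul_apply, norm_smul, RCLike.norm_ofReal,
        abs_of_pos (inv_pos.2 hK'0)]
      rw [← mul_assoc, mul_inv_cancel₀ hK'0.ne', one_mul]
    calc (∑ j, ‖∑ i : Fin (n+1), c i • q.1 (a + ((i:ℕ):𝕜) • x j)‖ ^ p) ^ (1/p)
        = (∑ j, ‖ψ (x j)‖ ^ p) ^ (1/p) := by
          refine congrArg (· ^ (1/p)) (Finset.sum_congr rfl fun j _ => ?_)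
          rw [hψa (x j)]
      _ = (∑ j, (K' * ‖φh (x j)‖) ^ p) ^ (1/p) := by
          refine congrArg (· ^ (1/p)) (Finset.sum_congr rfl fun j _ => ?_)
          rw [hψφ (x j)]
      _ = K' * (∑ j, ‖φh (x j)‖ ^ p) ^ (1/p) :=
          aux_lp_smul hp hK'0.le _ (fun j => norm_nonneg _)
      _ ≤ K' * Sφ :=
          mul_le_mul_of_nonneg_left (le_ciSup hSbdd ⟨φh, hφhn⟩) hK'0.le
  have hW : (∑ j, ‖w (x j)‖ ^ p) ^ (1/p) ≤ C * (K' * Sφ) := by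
    have hFSt := hCineq m (n+1) (fun j i => a + ((i:ℕ):𝕜) • x j) (fun j i => c i)
    have hLrw : ∀ j, ∑ i : Fin (n+1), c i • P (a + ((i:ℕ):𝕜) • x j) = w (x j) := by
      intro j
      exact aux_polarization n T c hc a (x j)
    have hL : (∑ j, ‖∑ i : Fin (n+1), c i • P (a + ((i:ℕ):𝕜) • x j)‖ ^ p) ^ (1/p)
        = (∑ j, ‖w (x j)‖ ^ p) ^ (1/p) := by
      refine congrArg (· ^ (1/p)) (Finset.sum_congr rfl fun j _ => ?_)
      rw [hLrw j]
    rw [← hL]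
    exact hFSt.trans (mul_le_mul_of_nonneg_left hQ hC0)
  calc (∑ j, ‖u (x j)‖ ^ p) ^ (1/p)
      ≤ (∑ j, |‖w (x j)‖ + D * ‖φ₀ (x j)‖| ^ p) ^ (1/p) := by
        refine Real.rpow_le_rpow
          (Finset.sum_nonneg fun j _ => Real.rpow_nonneg (norm_nonneg _) p)
          (Finset.sum_le_sum fun j _ => ?_) (by positivity)
        have h5 : (0:ℝ) ≤ ‖w (x j)‖ + D * ‖φ₀ (x j)‖ := by positivity
        rw [abs_of_nonneg h5]
        exact Real.rpow_le_rpow (norm_nonneg _) (hwu (x j)) hp0.le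
    _ ≤ (∑ j, |‖w (x j)‖| ^ p) ^ (1/p) + (∑ j, |D * ‖φ₀ (x j)‖| ^ p) ^ (1/p) :=
        Real.Lp_add_le Finset.univ _ _ hp
    _ = (∑ j, ‖w (x j)‖ ^ p) ^ (1/p) + (∑ j, (D * ‖φ₀ (x j)‖) ^ p) ^ (1/p) := by
        have e1 : ∀ j : Fin m, |‖w (x j)‖| ^ p = ‖w (x j)‖ ^ p := fun j => by
          rw [abs_of_nonneg (norm_nonneg _)]
        have e2 : ∀ j : Fin m, |D * ‖φ₀ (x j)‖| ^ p = (D * ‖φ₀ (x j)‖) ^ p := fun j => by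
          rw [abs_of_nonneg (mul_nonneg hD0 (norm_nonneg _))]
        rw [Finset.sum_congr rfl fun j _ => e1 j, Finset.sum_congr rfl fun j _ => e2 j]
    _ ≤ C * (K' * Sφ) + D * Sφ := by
        refine add_le_add hW ?_
        rw [aux_lp_smul hp hD0 _ (fun j => norm_nonneg _)]
        refine mul_le_mul_of_nonneg_left ?_ hD0
        exact le_ciSup hSbdd ⟨φ₀, le_of_eq hφ₀n⟩
    _ = (C * K' + D) * Sφ := by ring
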